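/- Let A be a C*-algebra, p a probability vector, a, b, a₁,…,aₙ, b₁,…,bₙ ∈ A, and r, s ≥ 0 such that ‖aᵢ − a‖ ≤ r and ‖bᵢ − b‖ ≤ s for all i. Then ‖Σᵢ pᵢaᵢbᵢ − (Σᵢ pᵢaᵢ)(Σᵢ pᵢbᵢ)‖ ≤ rs. -/

import Mathlib

open scoped InnerProductSpace
open WithCStarModule

/-- If `‖aᵢ − a‖ ≤ r` and `‖bᵢ − b‖ ≤ s` for all `i`, then
`‖Σᵢ pᵢaᵢbᵢ − (Σᵢ pᵢaᵢ)(Σᵢ pᵢbᵢ)‖ ≤ rs` in a C*-algebra. -/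
theorem stmt16 {A : Type*} [CStarAlgebra A]
    (n : ℕ) (p : Fin n → ℝ) (hp : ∀ i, 0 ≤ p i) (hp1 : ∑ i, p i = 1)
    (a b : A) (av bv : Fin n → A) (r s : ℝ) (hr : 0 ≤ r) (hs : 0 ≤ s)
    (ha : ∀ i, ‖av i - a‖ ≤ r) (hb : ∀ i, ‖bv i - b‖ ≤ s) :
    ‖∑ i, p i • (av i * bv i) - (∑ i, p i • av i) * (∑ i, p i • bv i)‖ ≤ r * s := by
  letI := CStarAlgebra.spectralOrder A
  haveI := CStarAlgebra.spectralOrderedRing A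
  set B : A := ∑ i, p i • bv i with hB
  set x : Fin n → A := fun i => av i - a with hxdef
  set y : Fin n → A := fun i => bv i - B with hydef
  set z : Fin n → A := fun i => bv i - b with hzdef
  set d : A := B - b with hddef
  -- rewrite the target
  have e2 : ∑ i, p i • (a * bv i) = a * B := by
    rw [hB, Finset.mul_sum]
    exact Finset.sum_congr rfl fun i _ => (mul_smul_comm _ _ _).symm
  have e3 : ∑ i, p i • (a * B) = a * B := by
    rw [← Finset.sum_smul, hp1, one_smul]
  have e1 : ∑ i, p i • (av i * B) = (∑ i, p i • av i) * B := by
    rw [Finset.sum_mul]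
    exact Finset.sum_congr rfl fun i _ => (smul_mul_assoc _ _ _).symm
  have key : ∑ i, p i • (av i * bv i) - (∑ i, p i • av i) * B
      = ∑ i, p i • (x i * y i) := by
    have expand : ∀ i ∈ Finset.univ, p i • (x i * y i)
        = p i • (av i * bv i) - p i • (av i * B) - p i • (a * bv i) + p i • (a * B) := by
      intro i _
      rw [hxdef, hydef]
      simp only [sub_mul, mul_sub, smul_sub, smul_add]
      abel
    rw [Finset.sum_congr rfl expand, Finset.sum_add_distrib, Finset.sum_sub_distrib,
      Finset.sum_sub_distrib, e1, e2, e3]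
    abel
  -- the two module elements
  set u : C⋆ᵐᵒᵈ(A, Fin n → A) :=
    (equiv A (Fin n → A)).symm fun i => Real.sqrt (p i) • x i with hu
  set v : C⋆ᵐᵒᵈ(A, Fin n → A) :=
    (equiv A (Fin n → A)).symm fun i => Real.sqrt (p i) • star (y i) with hv
  have hui : ∀ i, u i = Real.sqrt (p i) • x i := fun i => rfl
  have hvi : ∀ i, v i = Real.sqrt (p i) • star (y i) := fun i => rfl
  have sqrt_mul : ∀ i, Real.sqrt (p i) * Real.sqrt (p i) = p i :=
    fun i => Real.mul_self_sqrt (hp i)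
  have hinner : ⟪v, u⟫_A = ∑ i, p i • (x i * y i) := by
    rw [pi_inner]
    refine Finset.sum_congr rfl fun i _ => ?_
    rw [inner_def, hui, hvi]
    simp [star_smul, smul_mul_smul_comm, smul_smul, sqrt_mul i]
  -- bound ‖u‖ ≤ r
  have hu2 : ‖u‖ ^ 2 ≤ r ^ 2 := by
    rw [pi_norm_sq]
    calc ‖∑ i, ⟪u i, u i⟫_A‖ ≤ ∑ i, ‖⟪u i, u i⟫_A‖ := norm_sum_le _ _
      _ ≤ ∑ i, p i * r ^ 2 := by
          refine Finset.sum_le_sum fun i _ => ?_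
          rw [inner_def, hui]
          have : (Real.sqrt (p i) • x i) * star (Real.sqrt (p i) • x i)
              = p i • (x i * star (x i)) := by
            simp [star_smul, smul_mul_smul_comm, smul_smul, sqrt_mul i]
          rw [this, norm_smul, Real.norm_eq_abs, abs_of_nonneg (hp i)]
          refine mul_le_mul_of_nonneg_left ?_ (hp i)
          calc ‖x i * star (x i)‖ = ‖x i‖ * ‖x i‖ := CStarRing.norm_self_mul_star
            _ ≤ r * r := mul_le_mul (ha i) (ha i) (norm_nonneg _) hr
            _ = r ^ 2 := (sq r).symm
      _ = r ^ 2 := by rw [← Finset.sum_mul, hp1, one_mul]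
  have hnu : ‖u‖ ≤ r := by nlinarith [norm_nonneg u]
  -- bound ‖v‖ ≤ s
  have hd : ∑ i, p i • z i = d := by
    rw [hzdef, hddef, hB]
    simp only [smul_sub, Finset.sum_sub_distrib, ← Finset.sum_smul, hp1, one_smul]
  have f1 : ∑ i, p i • (star (z i) * d) = star d * d := by
    rw [Finset.sum_congr rfl (fun i _ => (smul_mul_assoc (p i) (star (z i)) d).symm),
      ← Finset.sum_mul]
    congr 1
    rw [← hd, star_sum]
    exact Finset.sum_congr rfl fun i _ => by simp [star_smul]
  have f2 : ∑ i, p i • (star d * z i) = star d * d := by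
    rw [Finset.sum_congr rfl (fun i _ => (mul_smul_comm (p i) (star d) (z i)).symm),
      ← Finset.mul_sum, hd]
  have f3 : ∑ i, p i • (star d * d) = star d * d := by
    rw [← Finset.sum_smul, hp1, one_smul]
  have hVW : ∑ i, p i • (star (y i) * y i)
      = (∑ i, p i • (star (z i) * z i)) - star d * d := by
    have expand : ∀ i ∈ Finset.univ, p i • (star (y i) * y i)
        = p i • (star (z i) * z i) - p i • (star (z i) * d) - p i • (star d * z i)
          + p i • (star d * d) := by
      intro i _
      have : y i = z i - d := by rw [hydef, hzdef, hddef]; exact (sub_sub_sub_cancel_right _ _ _).symm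
      rw [this, star_sub]
      simp only [sub_mul, mul_sub, smul_sub, smul_add]
      abel
    rw [Finset.sum_congr rfl expand, Finset.sum_add_distrib, Finset.sum_sub_distrib,
      Finset.sum_sub_distrib, f1, f2, f3]
    abel
  have hV0 : (0 : A) ≤ ∑ i, p i • (star (y i) * y i) := by
    refine Finset.sum_nonneg fun i _ => ?_
    have : star (Real.sqrt (p i) • y i) * (Real.sqrt (p i) • y i)
        = p i • (star (y i) * y i) := by
      simp [star_smul, smul_mul_smul_comm, smul_smul, sqrt_mul i]
    rw [← this]
    exact star_mul_self_nonneg _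
  have hVle : ∑ i, p i • (star (y i) * y i) ≤ ∑ i, p i • (star (z i) * z i) := by
    rw [hVW]
    exact sub_le_self _ (star_mul_self_nonneg d)
  have hW : ‖∑ i, p i • (star (z i) * z i)‖ ≤ s ^ 2 := by
    calc ‖∑ i, p i • (star (z i) * z i)‖ ≤ ∑ i, ‖p i • (star (z i) * z i)‖ := norm_sum_le _ _
      _ ≤ ∑ i, p i * s ^ 2 := by
          refine Finset.sum_le_sum fun i _ => ?_
          rw [norm_smul, Real.norm_eq_abs, abs_of_nonneg (hp i)]
          refine mul_le_mul_of_nonneg_left ?_ (hp i)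
          calc ‖star (z i) * z i‖ = ‖z i‖ * ‖z i‖ := CStarRing.norm_star_mul_self
            _ ≤ s * s := mul_le_mul (hb i) (hb i) (norm_nonneg _) hs
            _ = s ^ 2 := (sq s).symm
      _ = s ^ 2 := by rw [← Finset.sum_mul, hp1, one_mul]
  have hv2 : ‖v‖ ^ 2 ≤ s ^ 2 := by
    rw [pi_norm_sq]
    have : ∑ i, ⟪v i, v i⟫_A = ∑ i, p i • (star (y i) * y i) := by
      refine Finset.sum_congr rfl fun i _ => ?_
      rw [inner_def, hvi]
      simp [star_smul, smul_mul_smul_comm, smul_smul, sqrt_mul i]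
    rw [this]
    exact (CStarAlgebra.norm_le_norm_of_nonneg_of_le hV0 hVle).trans hW
  have hnv : ‖v‖ ≤ s := by nlinarith [norm_nonneg v]
  rw [key, ← hinner]
  calc ‖⟪v, u⟫_A‖ ≤ ‖v‖ * ‖u‖ := CStarModule.norm_inner_le _
    _ ≤ r * s := by rw [mul_comm]; exact mul_le_mul hnu hnv (norm_nonneg _) hr
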